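/- Let η > 0 and f ∈ C²([0,η],ℝ) with η < 1/(2‖f'‖_∞ ‖f''‖_∞). For 0 ≤ a < b ≤ η let 𝒞 = [(a,f(a)),(b,f(b))] be the chord. Then for any point M ∈ 𝒞, the line through M orthogonal to 𝒞 intersects the graph arc { (t,f(t)) : a ≤ t ≤ b } in exactly one point. -/

import Mathlib

noncomputable section
open Set

/-- if `η < 1/(2‖f'‖_∞‖f''‖_∞)`, then for `0 ≤ a < b ≤ η` and any point `M`
on the chord `𝒞 = [(a,f a),(b,f b)]`, the line through `M` orthogonal to `𝒞` meets the
graph arc `{(t, f t) : a ≤ t ≤ b}` in exactly one point. -/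
theorem stmt9 (η a b : ℝ) (f : ℝ → ℝ) (M1 M2 : ℝ)
    (hη0 : 0 < η)
    (hf : ContDiff ℝ 2 f)
    (hM1 : M1 = sSup ((fun x => |deriv f x|) '' Icc (0:ℝ) η))
    (hM2 : M2 = sSup ((fun x => |deriv (deriv f) x|) '' Icc (0:ℝ) η))
    (hη : η < 1 / (2 * M1 * M2))
    (ha : 0 ≤ a) (hab : a < b) (hb : b ≤ η) :
    ∀ M ∈ segment ℝ ((a, f a) : ℝ × ℝ) ((b, f b) : ℝ × ℝ),
      ∃! t : ℝ, t ∈ Icc a b ∧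
        (t - M.1) * (b - a) + (f t - M.2) * (f b - f a) = 0 := by
  -- basic regularity
  have hfd : Differentiable ℝ f := hf.differentiable (by norm_num)
  have hfc : Continuous f := hfd.continuous
  have hf' : ContDiff ℝ 1 (deriv f) := by
    have h : ContDiff ℝ ((1 : WithTop ℕ∞) + 1) f := by
      have : ((2 : ℕ) : WithTop ℕ∞) = (1 : WithTop ℕ∞) + 1 := by norm_num
      exact this ▸ (by exact_mod_cast hf)
    exact (contDiff_succ_iff_deriv.mp h).2.2
  have hf'd : Differentiable ℝ (deriv f) := hf'.differentiable (by norm_num)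
  have hf'c : Continuous (deriv f) := hf'd.continuous
  have hf''c : Continuous (deriv (deriv f)) := hf'.continuous_deriv (le_refl _)
  -- bounds
  have hbd1 : ∀ x ∈ Icc (0:ℝ) η, |deriv f x| ≤ M1 := by
    intro x hx
    rw [hM1]
    exact le_csSup (isCompact_Icc.bddAbove_image (hf'c.abs.continuousOn)) ⟨x, hx, rfl⟩
  have hbd2 : ∀ x ∈ Icc (0:ℝ) η, |deriv (deriv f) x| ≤ M2 := by
    intro x hx
    rw [hM2]
    exact le_csSup (isCompact_Icc.bddAbove_image (hf''c.abs.continuousOn)) ⟨x, hx, rfl⟩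
  have h0mem : (0:ℝ) ∈ Icc (0:ℝ) η := ⟨le_refl _, hη0.le⟩
  have hM1nn : 0 ≤ M1 := le_trans (abs_nonneg _) (hbd1 0 h0mem)
  have hM2nn : 0 ≤ M2 := le_trans (abs_nonneg _) (hbd2 0 h0mem)
  have hprodpos : 0 < 2 * M1 * M2 := by
    rcases lt_or_ge 0 (2 * M1 * M2) with h | h
    · exact h
    · exfalso
      have : (1:ℝ) / (2 * M1 * M2) ≤ 0 := one_div_nonpos.mpr h
      linarith
  have hkey : 2 * M1 * M2 * η < 1 := by
    have := (lt_div_iff₀ hprodpos).mp hη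
    linarith
  -- Lipschitz bound for deriv f on [0, η]
  have hlip : ∀ u ∈ Icc (0:ℝ) η, ∀ v ∈ Icc (0:ℝ) η, |deriv f u - deriv f v| ≤ M2 * η := by
    intro u hu v hv
    have h1 : ‖deriv f u - deriv f v‖ ≤ M2 * ‖u - v‖ :=
      (convex_Icc (0:ℝ) η).norm_image_sub_le_of_norm_deriv_le
        (fun x _ => hf'd x) (fun x hx => hbd2 x hx) hv hu
    have h2 : ‖u - v‖ ≤ η := by
      rw [Real.norm_eq_abs, abs_sub_le_iff]
      constructor <;> [linarith [hu.2, hv.1]; linarith [hv.2, hu.1]]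
    calc |deriv f u - deriv f v| ≤ M2 * ‖u - v‖ := h1
      _ ≤ M2 * η := by nlinarith
  -- mean value theorem
  obtain ⟨c, hc, hcslope⟩ := exists_deriv_eq_slope f hab hfc.continuousOn
    (fun x _ => (hfd x).differentiableWithinAt)
  have hcmem : c ∈ Icc (0:ℝ) η := ⟨le_trans ha hc.1.le, le_trans hc.2.le hb⟩
  have hba : b - a ≠ 0 := sub_ne_zero.mpr hab.ne'
  have hslope : f b - f a = deriv f c * (b - a) := by
    rw [hcslope]; field_simp
  intro M hM
  set g : ℝ → ℝ := fun t => (t - M.1) * (b - a) + (f t - M.2) * (f b - f a) with hg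
  -- derivative of g
  have hgderiv : ∀ t : ℝ, HasDerivAt g ((b - a) + deriv f t * (f b - f a)) t := by
    intro t
    have h1 : HasDerivAt (fun t : ℝ => (t - M.1) * (b - a)) (1 * (b - a)) t :=
      ((hasDerivAt_id t).sub_const M.1).mul_const _
    have h2 : HasDerivAt (fun t : ℝ => (f t - M.2) * (f b - f a))
        (deriv f t * (f b - f a)) t := (((hfd t).hasDerivAt).sub_const M.2).mul_const _
    have h3 := h1.add h2; rw [one_mul] at h3; exact h3
  have hgcont : Continuous g := by
    apply Continuous.add
    · exact (continuous_id.sub continuous_const).mul continuous_const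
    · exact ((hfc.sub continuous_const)).mul continuous_const
  -- g is strictly monotone on [a,b]
  have hmono : StrictMonoOn g (Icc a b) := by
    apply strictMonoOn_of_deriv_pos (convex_Icc a b) hgcont.continuousOn
    intro t ht
    rw [interior_Icc] at ht
    have htmem : t ∈ Icc (0:ℝ) η := ⟨le_trans ha ht.1.le, le_trans ht.2.le hb⟩
    rw [(hgderiv t).deriv, hslope]
    have h1 : |deriv f c| ≤ M1 := hbd1 c hcmem
    have h2 : |deriv f t - deriv f c| ≤ M2 * η := hlip t htmem c hcmem
    have h3 : 1 + deriv f t * deriv f c > 1/2 := by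
      have e : deriv f t * deriv f c =
          deriv f c ^ 2 + deriv f c * (deriv f t - deriv f c) := by ring
      have h4 : |deriv f c * (deriv f t - deriv f c)| ≤ M1 * (M2 * η) := by
        rw [abs_mul]
        exact mul_le_mul h1 h2 (abs_nonneg _) hM1nn
      have h5 : -(M1 * (M2 * η)) ≤ deriv f c * (deriv f t - deriv f c) :=
        neg_le_of_abs_le h4
      nlinarith [sq_nonneg (deriv f c)]
    nlinarith
  -- the point M on the chord
  obtain ⟨u, v, hu, hv, huv, hMuv⟩ := hM
  have hM1c : M.1 = u * a + v * b := by
    rw [← hMuv]; simp [Prod.smul_def]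
  have hM2c : M.2 = u * f a + v * f b := by
    rw [← hMuv]; simp [Prod.smul_def]
  have hga : g a ≤ 0 := by
    have : g a = -v * ((b - a)^2 + (f b - f a)^2) := by
      simp only [hg, hM1c, hM2c]
      have : u = 1 - v := by linarith
      rw [this]; ring
    rw [this]
    apply mul_nonpos_of_nonpos_of_nonneg
    · linarith
    · positivity
  have hgb : 0 ≤ g b := by
    have : g b = u * ((b - a)^2 + (f b - f a)^2) := by
      simp only [hg, hM1c, hM2c]
      have : v = 1 - u := by linarith
      rw [this]; ring
    rw [this]
    positivity
  -- existence by IVT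
  obtain ⟨t₀, ht₀mem, ht₀⟩ := intermediate_value_Icc hab.le hgcont.continuousOn
    (⟨hga, hgb⟩ : (0:ℝ) ∈ Icc (g a) (g b))
  refine ⟨t₀, ⟨ht₀mem, ht₀⟩, ?_⟩
  rintro t ⟨htmem, ht⟩
  exact hmono.injOn htmem ht₀mem (by rw [show g t = _ from ht, show g t₀ = _ from ht₀])
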